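/- Let B be a (d+1)×(d+1) tridiagonal matrix over a field with all diagonal entries zero, subdiagonal entries β_1,...,β_d and superdiagonal entries γ_1,...,γ_d, all nonzero. If d is even, then the null space of B is one-dimensional, spanned by the vector v = (v_0,...,v_d) with v_k = 0 for k odd and v_k = ∏_{1 ≤ i ≤ k-1, i odd} (-β_i/γ_{i+1}) for k even. -/

import Mathlib

open Matrix Finset

lemma tridiag_rowEq {d : ℕ} {K : Type*} [Field K]
    (β γ : ℕ → K) (B : Matrix (Fin (d+1)) (Fin (d+1)) K)
    (hdiag : ∀ i, B i i = 0)
    (hsub : ∀ i j : Fin (d+1), (i : ℕ) = (j : ℕ) + 1 → B i j = β i)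
    (hsup : ∀ i j : Fin (d+1), (i : ℕ) + 1 = (j : ℕ) → B i j = γ j)
    (hzero : ∀ i j : Fin (d+1), (i : ℕ) + 1 < (j : ℕ) ∨ (j : ℕ) + 1 < (i : ℕ) → B i j = 0)
    (x : Fin (d+1) → K) (n : ℕ) (hn : n < d + 1) :
    B.mulVec x ⟨n, hn⟩ =
      (if 1 ≤ n then β n * x ⟨n - 1, by omega⟩ else 0)
      + (if h : n < d then γ (n+1) * x ⟨n+1, by omega⟩ else 0) := by
  have hS : B.mulVec x ⟨n, hn⟩ = ∑ j ∈ Finset.univ.filter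
      (fun j : Fin (d+1) => n = (j:ℕ)+1 ∨ n+1 = (j:ℕ)), B ⟨n, hn⟩ j * x j := by
    rw [Matrix.mulVec, dotProduct, Finset.sum_filter]
    apply Finset.sum_congr rfl
    intro j _
    by_cases hj : n = (j:ℕ)+1 ∨ n+1 = (j:ℕ)
    · simp [hj]
    · simp only [hj, if_false]
      by_cases hij : n = (j:ℕ)
      · have : (⟨n, hn⟩ : Fin (d+1)) = j := Fin.ext hij
        rw [this, hdiag, zero_mul]
      · rw [hzero ⟨n, hn⟩ j (by simp only [Fin.val_mk] <;> omega), zero_mul]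
  rw [hS]
  by_cases h1 : 1 ≤ n
  · by_cases h2 : n < d
    · rw [if_pos h1, dif_pos h2]
      have hset : Finset.univ.filter
          (fun j : Fin (d+1) => n = (j:ℕ)+1 ∨ n+1 = (j:ℕ))
          = {⟨n - 1, by omega⟩, ⟨n+1, by omega⟩} := by
        ext j
        simp only [Finset.mem_filter, Finset.mem_univ, true_and, Finset.mem_insert,
          Finset.mem_singleton, Fin.ext_iff, Fin.val_mk]
        omega
      rw [hset, Finset.sum_pair (by simp only [ne_eq, Fin.mk.injEq]; omega),
        hsub _ _ (by simp only [Fin.val_mk] <;> omega), hsup _ _ (by simp only [Fin.val_mk] <;> omega)]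
    · rw [if_pos h1, dif_neg h2, add_zero]
      have hset : Finset.univ.filter
          (fun j : Fin (d+1) => n = (j:ℕ)+1 ∨ n+1 = (j:ℕ))
          = {⟨n - 1, by omega⟩} := by
        ext j
        simp only [Finset.mem_filter, Finset.mem_univ, true_and,
          Finset.mem_singleton, Fin.ext_iff, Fin.val_mk]
        omega
      rw [hset, Finset.sum_singleton, hsub _ _ (by simp only [Fin.val_mk] <;> omega)]
  · by_cases h2 : n < d
    · rw [if_neg h1, dif_pos h2, zero_add]
      have hset : Finset.univ.filter
          (fun j : Fin (d+1) => n = (j:ℕ)+1 ∨ n+1 = (j:ℕ))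
          = {⟨n+1, by omega⟩} := by
        ext j
        simp only [Finset.mem_filter, Finset.mem_univ, true_and,
          Finset.mem_singleton, Fin.ext_iff, Fin.val_mk]
        omega
      rw [hset, Finset.sum_singleton, hsup _ _ (by simp only [Fin.val_mk] <;> omega)]
    · rw [if_neg h1, dif_neg h2, add_zero]
      have hset : Finset.univ.filter
          (fun j : Fin (d+1) => n = (j:ℕ)+1 ∨ n+1 = (j:ℕ))
          = (∅ : Finset (Fin (d+1))) := by
        ext j
        simp only [Finset.mem_filter, Finset.mem_univ, true_and, Finset.notMem_empty,
          iff_false]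
        have := j.isLt
        omega
      rw [hset, Finset.sum_empty]

/-- null space of a tridiagonal matrix with zero diagonal and
nonzero off-diagonal band, d even: one-dimensional with the stated spanning vector. -/
theorem stmt2 {d : ℕ} {K : Type*} [Field K]
    (β γ : ℕ → K) (B : Matrix (Fin (d+1)) (Fin (d+1)) K)
    (hdiag : ∀ i, B i i = 0)
    (hsub : ∀ i j : Fin (d+1), (i : ℕ) = (j : ℕ) + 1 → B i j = β i)
    (hsup : ∀ i j : Fin (d+1), (i : ℕ) + 1 = (j : ℕ) → B i j = γ j)
    (hzero : ∀ i j : Fin (d+1), (i : ℕ) + 1 < (j : ℕ) ∨ (j : ℕ) + 1 < (i : ℕ) → B i j = 0)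
    (hβ : ∀ i : ℕ, 1 ≤ i → i ≤ d → β i ≠ 0)
    (hγ : ∀ i : ℕ, 1 ≤ i → i ≤ d → γ i ≠ 0)
    (hd : Even d)
    (v : Fin (d+1) → K)
    (hv : v = fun k : Fin (d+1) => if Odd (k : ℕ) then 0 else
      ∏ i ∈ (Finset.range (k : ℕ)).filter (fun i => Odd i), (-(β i / γ (i+1)))) :
    v ≠ 0 ∧
    LinearMap.ker (Matrix.toLin' B) = Submodule.span K {v} := by
  have hdd : d % 2 = 0 := Nat.even_iff.mp hd
  -- basic values of v
  have vOdd : ∀ (n : ℕ) (h : n < d+1), Odd n → v ⟨n, h⟩ = 0 := by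
    intro n h hn
    rw [hv]
    simp [hn]
  have vEven : ∀ (n : ℕ) (h : n < d+1), ¬ Odd n →
      v ⟨n, h⟩ = ∏ i ∈ (Finset.range n).filter (fun i => Odd i), (-(β i / γ (i+1))) := by
    intro n h hn
    rw [hv]
    simp [hn]
  have hv0 : v 0 = 1 := by
    rw [hv]
    norm_num
  -- the two-step recursion for v
  have vrec : ∀ (n : ℕ) (h : n+2 < d+1),
      v ⟨n+2, h⟩ = -(β (n+1) / γ (n+2)) * v ⟨n, by omega⟩ := by
    intro n h
    rcases Nat.even_or_odd n with he | ho
    · have he' : n % 2 = 0 := Nat.even_iff.mp he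
      have hne : ¬ Odd n := by rw [Nat.odd_iff]; omega
      have hne2 : ¬ Odd (n+2) := by rw [Nat.odd_iff]; omega
      rw [vEven _ _ hne, vEven _ _ hne2]
      have hset : (Finset.range (n+2)).filter (fun i => Odd i)
          = insert (n+1) ((Finset.range n).filter (fun i => Odd i)) := by
        ext i
        simp only [Finset.mem_filter, Finset.mem_range, Finset.mem_insert, Nat.odd_iff]
        omega
      rw [hset, Finset.prod_insert (by simp)]
    · have ho2 : Odd (n+2) := by rw [Nat.odd_iff] at *; omega
      rw [vOdd _ _ ho2, vOdd _ _ ho, mul_zero]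
  -- B * v = 0
  have hBv : B.mulVec v = 0 := by
    funext i
    have hi := i.isLt
    have : i = ⟨(i : ℕ), hi⟩ := by simp
    rw [this, tridiag_rowEq β γ B hdiag hsub hsup hzero v (i : ℕ) hi, Pi.zero_apply]
    by_cases h1 : 1 ≤ (i : ℕ)
    · by_cases h2 : (i : ℕ) < d
      · rw [if_pos h1, dif_pos h2]
        rcases Nat.even_or_odd (i : ℕ) with he | ho
        · have he' : (i:ℕ) % 2 = 0 := Nat.even_iff.mp he
          rw [vOdd _ _ (by rw [Nat.odd_iff]; omega), vOdd _ _ (by rw [Nat.odd_iff]; omega)]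
          ring
        · have ho' : (i:ℕ) % 2 = 1 := Nat.odd_iff.mp ho
          have e2 : (i:ℕ) - 1 + 2 = (i:ℕ) + 1 := by omega
          have hrec := vrec ((i:ℕ) - 1) (by omega)
          simp only [e2] at hrec
          have e1 : (i:ℕ) - 1 + 1 = (i:ℕ) := by omega
          simp only [e1] at hrec
          rw [hrec]
          have hγ' : γ ((i:ℕ)+1) ≠ 0 := hγ _ (by omega) (by omega)
          field_simp
          ring
      · rw [if_pos h1, dif_neg h2, add_zero]
        have hid : (i : ℕ) = d := by omega
        rw [vOdd _ _ (by rw [Nat.odd_iff]; omega), mul_zero]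
    · rw [if_neg h1, zero_add]
      by_cases h2 : (i : ℕ) < d
      · rw [dif_pos h2, vOdd _ _ (by rw [Nat.odd_iff]; omega), mul_zero]
      · rw [dif_neg h2]
  -- kernel elements are multiples of v
  have hker : ∀ x : Fin (d+1) → K, B.mulVec x = 0 →
      ∀ (n : ℕ) (h : n < d+1), x ⟨n, h⟩ = x 0 * v ⟨n, h⟩ := by
    intro x hx n
    induction n using Nat.strong_induction_on with
    | _ n ih =>
      intro h
      match n, h, ih with
      | 0, h, ih =>
        have h0 : (⟨0, h⟩ : Fin (d+1)) = 0 := by simp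
        rw [h0, hv0, mul_one]
      | 1, h, ih =>
        have hrow := congrFun hx (0 : Fin (d+1))
        have h01 : (0 : Fin (d+1)) = ⟨0, by omega⟩ := by simp
        rw [h01, tridiag_rowEq β γ B hdiag hsub hsup hzero x 0 (by omega),
          Pi.zero_apply, if_neg (by omega), dif_pos (by omega : 0 < d), zero_add] at hrow
        have hγ1 : γ (0+1) ≠ 0 := hγ _ (by omega) (by omega)
        have hx1 : x ⟨0+1, by omega⟩ = 0 := (mul_eq_zero.mp hrow).resolve_left hγ1
        have : x ⟨1, h⟩ = 0 := hx1
        rw [this, vOdd 1 h (by rw [Nat.odd_iff]), mul_zero]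
      | (m+2), h, ih =>
        have hrow := congrFun hx (⟨m+1, by omega⟩ : Fin (d+1))
        rw [tridiag_rowEq β γ B hdiag hsub hsup hzero x (m+1) (by omega),
          Pi.zero_apply, if_pos (by omega), dif_pos (by omega : m+1 < d)] at hrow
        have hm : m + 1 - 1 = m := by omega
        simp only [hm] at hrow
        have hγ' : γ (m+1+1) ≠ 0 := hγ _ (by omega) (by omega)
        have e : x ⟨m+1+1, by omega⟩ = -(β (m+1) / γ (m+2)) * x ⟨m, by omega⟩ := by
          field_simp
          linear_combination hrow
        have e' : x ⟨m+2, h⟩ = -(β (m+1) / γ (m+2)) * x ⟨m, by omega⟩ := e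
        rw [e', vrec m h, ih m (by omega)]
        ring
  constructor
  · intro hcon
    rw [hcon] at hv0
    simp at hv0
  · apply le_antisymm
    · intro x hxk
      rw [LinearMap.mem_ker, Matrix.toLin'_apply] at hxk
      rw [Submodule.mem_span_singleton]
      refine ⟨x 0, funext fun k => ?_⟩
      have hk := hker x hxk (k : ℕ) k.isLt
      simp only [Fin.eta] at hk
      simp [hk]
    · rw [Submodule.span_le, Set.singleton_subset_iff, SetLike.mem_coe,
        LinearMap.mem_ker, Matrix.toLin'_apply]
      exact hBv
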